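/- Let K be an algebraically closed field of characteristic p > 0, let H be a finite subgroup of PGL(2,K) acting on the projective line P¹(K) by fractional linear transformations, and let x ∈ P¹(K) be a point whose H-orbit contains at least two points. Then there exists a nontrivial element γ' ∈ H such that no fixed point of γ' on P¹(K) belongs to the orbit H·x. -/

import Mathlib

open scoped LinearAlgebra.Projectivization

noncomputable section

variable {K : Type*} [Field K]

/-- The projective line over a field `K`. -/
abbrev ProjLine (K : Type*) [Field K] : Type _ := ℙ K (Fin 2 → K)

/-- `PGL(2,K)`: the quotient of `GL(2,K)` by its center. -/
abbrev ProjectiveGL2 (K : Type*) [Field K] : Type _ :=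
  GL (Fin 2) K ⧸ Subgroup.center (GL (Fin 2) K)

/-- The permutation of the projective line induced by a linear automorphism of `K²`. -/
def projPerm (e : (Fin 2 → K) ≃ₗ[K] (Fin 2 → K)) : Equiv.Perm (ProjLine K) where
  toFun := Projectivization.map e.toLinearMap e.injective
  invFun := Projectivization.map e.symm.toLinearMap e.symm.injective
  left_inv x := by
    induction x using Projectivization.ind with
    | h v hv =>
      rw [Projectivization.map_mk, Projectivization.map_mk]
      exact (Projectivization.mk_eq_mk_iff' K _ _ _ _).2 ⟨1, by simp⟩
  right_inv x := by
    induction x using Projectivization.ind with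
    | h v hv =>
      rw [Projectivization.map_mk, Projectivization.map_mk]
      exact (Projectivization.mk_eq_mk_iff' K _ _ _ _).2 ⟨1, by simp⟩

theorem projPerm_mk (e : (Fin 2 → K) ≃ₗ[K] (Fin 2 → K)) (v : Fin 2 → K) (hv : v ≠ 0) :
    projPerm e (Projectivization.mk K v hv) =
      Projectivization.mk K (e v) (by simpa using hv) :=
  Projectivization.map_mk e.toLinearMap e.injective v hv

/-- The action of `GL(2,K)` on the projective line by fractional linear (Möbius)
transformations, as a homomorphism to the permutation group of `ℙ¹(K)`. -/
def mobiusGL : GL (Fin 2) K →* Equiv.Perm (ProjLine K) where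
  toFun g := projPerm (Matrix.GeneralLinearGroup.toLin g).toLinearEquiv
  map_one' := by
    ext x
    induction x using Projectivization.ind with
    | h v hv =>
      rw [Equiv.Perm.coe_one, id_eq, projPerm_mk]
      exact (Projectivization.mk_eq_mk_iff' K _ _ _ _).2 ⟨1, by simp⟩
  map_mul' g h := by
    ext x
    induction x using Projectivization.ind with
    | h v hv =>
      rw [Equiv.Perm.coe_mul, Function.comp_apply, projPerm_mk, projPerm_mk, projPerm_mk]
      refine (Projectivization.mk_eq_mk_iff' K _ _ _ _).2 ⟨1, ?_⟩
      rw [one_smul, map_mul]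
      rfl

theorem center_le_ker_mobiusGL :
    Subgroup.center (GL (Fin 2) K) ≤ (mobiusGL (K := K)).ker := by
  intro g hg
  have hcomm : ∀ t : Matrix.TransvectionStruct (Fin 2) K,
      Commute t.toMatrix (g : Matrix (Fin 2) (Fin 2) K) := by
    intro t
    have hdet : IsUnit t.toMatrix.det := by
      rw [Matrix.TransvectionStruct.det]; exact isUnit_one
    obtain ⟨u, hu⟩ := (Matrix.isUnit_iff_isUnit_det _).2 hdet
    have hc := Subgroup.mem_center_iff.mp hg u
    calc t.toMatrix * (g : Matrix (Fin 2) (Fin 2) K)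
        = ((u * g : GL (Fin 2) K) : Matrix (Fin 2) (Fin 2) K) := by rw [← hu]; rfl
      _ = ((g * u : GL (Fin 2) K) : Matrix (Fin 2) (Fin 2) K) := by rw [hc]
      _ = (g : Matrix (Fin 2) (Fin 2) K) * t.toMatrix := by rw [← hu]; rfl
  obtain ⟨r, hr⟩ := Matrix.mem_range_scalar_of_commute_transvectionStruct hcomm
  have hr0 : r ≠ 0 := by
    rintro rfl
    have hu : IsUnit (g : Matrix (Fin 2) (Fin 2) K) := Units.isUnit g
    rw [← hr, map_zero] at hu
    have := (Matrix.isUnit_iff_isUnit_det _).1 hu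
    rw [Matrix.det_zero] at this
    simp at this
  rw [MonoidHom.mem_ker]
  ext x
  induction x using Projectivization.ind with
  | h v hv =>
    rw [Equiv.Perm.coe_one, id_eq]
    show projPerm _ _ = _
    rw [projPerm_mk]
    refine (Projectivization.mk_eq_mk_iff' K _ _ _ _).2 ⟨r, ?_⟩
    have happ : (Matrix.GeneralLinearGroup.toLin g).toLinearEquiv v =
        Matrix.mulVec (g : Matrix (Fin 2) (Fin 2) K) v := rfl
    rw [happ, ← hr]
    ext i
    rw [Pi.smul_apply, Matrix.scalar_apply, Matrix.mulVec_diagonal, smul_eq_mul]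

/-- The action of `PGL(2,K)` on the projective line `ℙ¹(K)` by fractional linear (Möbius)
transformations. -/
def mobiusPGL : ProjectiveGL2 K →* Equiv.Perm (ProjLine K) :=
  QuotientGroup.lift _ mobiusGL center_le_ker_mobiusGL

end

open MulAction in
theorem jordan_derangement {G : Type*} [Group G] [Finite G] {X : Type*} [MulAction G X]
    (x : X) (h2 : (orbit G x).Nontrivial) :
    ∃ g : G, g ≠ 1 ∧ ∀ y ∈ orbit G x, g • y ≠ y := by
  classical
  haveI : Fintype G := Fintype.ofFinite G
  by_contra hcon
  push_neg at hcon
  have hfin : (orbit G x).Finite := Set.finite_range _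
  set O : Finset X := hfin.toFinset with hOdef
  set n : ℕ := O.card with hndef
  have hncard : (orbit G x).ncard = n := Set.ncard_eq_toFinset_card _ hfin
  have hn2 : 2 ≤ n := by
    obtain ⟨a, ha, b, hb, hab⟩ := h2
    exact Finset.one_lt_card.2 ⟨a, hfin.mem_toFinset.2 ha, b, hfin.mem_toFinset.2 hb, hab⟩
  set cG : ℕ := Fintype.card G with hcGdef
  set s : X → ℕ := fun y => (Finset.univ.filter fun g : G => g • y = y).card with hsdef
  have h1mem : ∀ y : X, (1 : G) ∈ Finset.univ.filter fun g : G => g • y = y :=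
    fun y => Finset.mem_filter.2 ⟨Finset.mem_univ _, one_smul _ _⟩
  have hstabpos : ∀ y : X, 1 ≤ s y := fun y => Finset.card_pos.2 ⟨1, h1mem y⟩
  -- orbit-stabilizer: for each y in the orbit, s y * n = cG
  have key : ∀ y ∈ O, s y * n = cG := by
    intro y hy
    have hy' : y ∈ orbit G x := hfin.mem_toFinset.1 hy
    have h1 : (stabilizer G y).index = n := by
      rw [MulAction.index_stabilizer, orbit_eq_iff.2 hy', hncard]
    have h2' : Nat.card (stabilizer G y) * n = cG := by
      rw [← h1, Subgroup.card_mul_index, Nat.card_eq_fintype_card]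
    rw [← h2']
    congr 1
    rw [Nat.card_eq_fintype_card, Fintype.card_subtype]
    congr 1
  have hsum : (∑ y ∈ O, s y) = cG := by
    have hmul : (∑ y ∈ O, s y) * n = cG * n := by
      rw [Finset.sum_mul, Finset.sum_congr rfl key, Finset.sum_const, smul_eq_mul, mul_comm]
    exact Nat.eq_of_mul_eq_mul_right (by omega) hmul
  have hsumlb : n ≤ cG := by
    calc n = ∑ _y ∈ O, 1 := by rw [Finset.sum_const, smul_eq_mul, mul_one]
      _ ≤ ∑ y ∈ O, s y := Finset.sum_le_sum fun y _ => hstabpos y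
      _ = cG := hsum
  -- every nontrivial element lies in some stabilizer of an orbit point
  have hsub : Finset.univ.erase (1 : G) ⊆
      O.biUnion (fun y => (Finset.univ.filter fun g : G => g • y = y).erase 1) := by
    intro g hg
    have hg1 : g ≠ 1 := (Finset.mem_erase.1 hg).1
    obtain ⟨y, hy, hgy⟩ := hcon g hg1
    exact Finset.mem_biUnion.2 ⟨y, hfin.mem_toFinset.2 hy,
      Finset.mem_erase.2 ⟨hg1, Finset.mem_filter.2 ⟨Finset.mem_univ _, hgy⟩⟩⟩
  have hcard1 : (Finset.univ.erase (1 : G)).card = cG - 1 := by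
    rw [Finset.card_erase_of_mem (Finset.mem_univ _), Finset.card_univ]
  have hsum2 : (∑ y ∈ O, (s y - 1)) + n = cG := by
    calc (∑ y ∈ O, (s y - 1)) + n = (∑ y ∈ O, (s y - 1)) + ∑ _y ∈ O, 1 := by
          rw [Finset.sum_const, smul_eq_mul, mul_one]
      _ = ∑ y ∈ O, ((s y - 1) + 1) := (Finset.sum_add_distrib).symm
      _ = ∑ y ∈ O, s y := Finset.sum_congr rfl fun y _ => Nat.sub_add_cancel (hstabpos y)
      _ = cG := hsum
  have hbound : (O.biUnion (fun y => (Finset.univ.filter fun g : G => g • y = y).erase 1)).card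
      ≤ cG - n := by
    calc _ ≤ ∑ y ∈ O, ((Finset.univ.filter fun g : G => g • y = y).erase 1).card :=
          Finset.card_biUnion_le
      _ = ∑ y ∈ O, (s y - 1) :=
          Finset.sum_congr rfl fun y _ => Finset.card_erase_of_mem (h1mem y)
      _ ≤ cG - n := by omega
  have hfinal := (Finset.card_le_card hsub).trans hbound
  omega

/-- key claim in the proof of Lemma 3.4: if `H` is a finite subgroup of
`PGL(2,K)` (`K` algebraically closed of characteristic `p > 0`) acting on `ℙ¹(K)` by
fractional linear transformations and `x ∈ ℙ¹(K)` has an `H`-orbit with at least two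
points, then some nontrivial `γ' ∈ H` has none of its fixed points in the orbit `H·x`. -/
theorem exists_elt_with_fixed_points_off_orbit {p : ℕ} [Fact p.Prime]
    {K : Type*} [Field K] [IsAlgClosed K] [CharP K p]
    (H : Subgroup (ProjectiveGL2 K)) (hH : Finite H)
    (x : ProjLine K)
    (horb : {y : ProjLine K | ∃ h ∈ H, mobiusPGL h x = y}.Nontrivial) :
    ∃ γ' ∈ H, γ' ≠ 1 ∧
      ∀ y : ProjLine K, mobiusPGL γ' y = y →
        y ∉ {y : ProjLine K | ∃ h ∈ H, mobiusPGL h x = y} := by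
  classical
  letI : MulAction ↥H (ProjLine K) :=
    MulAction.compHom _ ((mobiusPGL (K := K)).comp H.subtype)
  have hsmul : ∀ (g : ↥H) (y : ProjLine K),
      g • y = mobiusPGL (g : ProjectiveGL2 K) y := fun _ _ => rfl
  have horbit : MulAction.orbit ↥H x = {y : ProjLine K | ∃ h ∈ H, mobiusPGL h x = y} := by
    ext y
    constructor
    · rintro ⟨g, rfl⟩
      exact ⟨(g : ProjectiveGL2 K), g.2, rfl⟩
    · rintro ⟨h, hh, rfl⟩
      exact ⟨⟨h, hh⟩, rfl⟩
  obtain ⟨g, hg1, hg⟩ := jordan_derangement (G := ↥H) x (horbit ▸ horb)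
  refine ⟨(g : ProjectiveGL2 K), g.2, ?_, ?_⟩
  · intro hc
    exact hg1 (by ext; simpa using hc)
  · intro y hy hyO
    exact hg y (horbit ▸ hyO) (by rw [hsmul]; exact hy)
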